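/- The Lebesgue volume of the set Δ_ε := {(x,y,z) ∈ ℝ³ : x > 0, y > 0, z > 0, x ≥ y·z, y ≥ x·z, z ≥ x·y} is 1/4. (Δ_ε is the set of eigenvalue triples of embeddable K3 Markov matrices with pairwise distinct eigenvalues; equivalently, the volume equals the iterated integral ∫₀¹ ( ∫₀^z ∫_{z·x}^{x/z} dy dx + ∫_z¹ ∫_{x·z}^{z/x} dy dx ) dz = 1/4.) -/

import Mathlib

open MeasureTheory intervalIntegral

/-- The set of eigenvalue triples of embeddable K3 Markov matrices (with distinct
eigenvalues). -/
def Δε : Set (ℝ × ℝ × ℝ) :=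
  {p | 0 < p.1 ∧ 0 < p.2.1 ∧ 0 < p.2.2 ∧
       p.2.1 * p.2.2 ≤ p.1 ∧ p.1 * p.2.2 ≤ p.2.1 ∧ p.1 * p.2.1 ≤ p.2.2}

open Real Set
open scoped Interval

lemma L1 (x : ℝ) (hx : 0 < x) : ∫ y in (0:ℝ)..x, (y/x - x*y) = x/2 - x^3/2 := by
  rw [intervalIntegral.integral_sub, intervalIntegral.integral_div,
    intervalIntegral.integral_const_mul, integral_id]
  · field_simp; ring
  · exact (IntervalIntegrable.div_const intervalIntegrable_id x)
  · exact (intervalIntegrable_id.const_mul x)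

lemma L2 (x : ℝ) (hx : 0 < x) : ∫ y in x..(1:ℝ), (x/y - x*y) = -(x * Real.log x) - x/2 + x^3/2 := by
  have h0 : (0:ℝ) ∉ [[x, 1]] := by
    intro h
    rcases Set.mem_uIcc.1 h with ⟨h1, _⟩ | ⟨_, h2⟩ <;> linarith
  have hi : IntervalIntegrable (fun y : ℝ => x/y) volume x 1 := by
    apply ContinuousOn.intervalIntegrable
    apply ContinuousOn.div continuousOn_const continuousOn_id
    intro y hy h; exact h0 (h ▸ hy)
  have e1 : EqOn (fun y : ℝ => x/y) (fun y => x * (1/y)) [[x,1]] := fun y _ => by ring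
  rw [intervalIntegral.integral_sub hi (intervalIntegrable_id.const_mul x),
    intervalIntegral.integral_congr e1, intervalIntegral.integral_const_mul,
    intervalIntegral.integral_const_mul, integral_one_div h0, integral_id,
    Real.log_div one_ne_zero (ne_of_gt hx), Real.log_one]
  ring

lemma key : ∫ x in (0:ℝ)..1, -(x * Real.log x) = 1/4 := by
  have hF : ∀ x ∈ Set.Ioo (0:ℝ) 1, HasDerivAt (fun x : ℝ => x^2/4 - (x * Real.log x) * (x/2)) (-(x * Real.log x)) x := by
    intro x hx
    have h1 : HasDerivAt (fun x : ℝ => x * Real.log x) (Real.log x + 1) x := by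
      have h := (hasDerivAt_id x).mul (Real.hasDerivAt_log (ne_of_gt hx.1))
      exact h.congr_deriv (by simp [mul_inv_cancel₀ (ne_of_gt hx.1)])
    have h2 : HasDerivAt (fun x : ℝ => x^2/4) (x/2) x := by
      have := (hasDerivAt_pow 2 x).div_const 4
      exact this.congr_deriv (by norm_num <;> ring)
    have h3 := h1.mul ((hasDerivAt_id x).div_const 2)
    have := h2.sub h3
    exact this.congr_deriv (by simp only [id]; ring)
  have hc : Continuous fun x : ℝ => x^2/4 - (x * Real.log x) * (x/2) :=
    ((continuous_pow 2).div_const 4).sub (Real.continuous_mul_log.mul (continuous_id.div_const 2))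
  rw [intervalIntegral.integral_eq_sub_of_hasDerivAt_of_le (by norm_num)
    hc.continuousOn hF ((Real.continuous_mul_log.neg).intervalIntegrable 0 1)]
  simp

lemma slice2 (x : ℝ) (hx : x ∈ Set.Ioo (0:ℝ) 1) :
    (volume : Measure (ℝ × ℝ))
      {q : ℝ × ℝ | 0 < q.1 ∧ 0 < q.2 ∧ q.1*q.2 ≤ x ∧ x*q.2 ≤ q.1 ∧ x*q.1 ≤ q.2}
    = ENNReal.ofReal (-(x * Real.log x)) := by
  obtain ⟨hx0, hx1⟩ := hx
  set Sx : Set (ℝ × ℝ) := {q : ℝ × ℝ | 0 < q.1 ∧ 0 < q.2 ∧ q.1*q.2 ≤ x ∧ x*q.2 ≤ q.1 ∧ x*q.1 ≤ q.2} with hSx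
  have hS : MeasurableSet Sx := by
    apply MeasurableSet.inter (measurableSet_lt measurable_const measurable_fst)
    apply MeasurableSet.inter (measurableSet_lt measurable_const measurable_snd)
    apply MeasurableSet.inter (measurableSet_le (measurable_fst.mul measurable_snd) measurable_const)
    exact MeasurableSet.inter (measurableSet_le (measurable_snd.const_mul x) measurable_fst)
      (measurableSet_le (measurable_fst.const_mul x) measurable_snd)
  have hslice : ∀ y : ℝ, volume (Prod.mk y ⁻¹' Sx)
      = (Set.Ioi (0:ℝ)).indicator (fun y => ENNReal.ofReal (min (x/y) (y/x) - x*y)) y := by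
    intro y
    by_cases hy : 0 < y
    · rw [Set.indicator_of_mem (Set.mem_Ioi.2 hy)]
      have heq : Prod.mk y ⁻¹' Sx = Set.Icc (x*y) (min (x/y) (y/x)) := by
        ext z
        simp only [hSx, Set.mem_preimage, Set.mem_setOf_eq, Set.mem_Icc, le_min_iff]
        constructor
        · rintro ⟨_, hz, h1, h2, h3⟩
          refine ⟨h3, (le_div_iff₀ hy).2 (by linarith [mul_comm y z]), (le_div_iff₀ hx0).2 (by linarith [mul_comm x z])⟩
        · rintro ⟨h3, ⟨h1, h2⟩⟩
          have hz : 0 < z := lt_of_lt_of_le (mul_pos hx0 hy) h3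
          have hh1 := (le_div_iff₀ hy).1 h1
          have hh2 := (le_div_iff₀ hx0).1 h2
          exact ⟨hy, hz, by linarith [mul_comm z y], by linarith [mul_comm z x], h3⟩
      rw [heq, Real.volume_Icc]
    · rw [Set.indicator_of_notMem (by simpa using hy)]
      have heq : Prod.mk y ⁻¹' Sx = ∅ := by
        ext z; simp only [hSx, Set.mem_preimage, Set.mem_setOf_eq, Set.mem_empty_iff_false, iff_false]
        rintro ⟨h, _⟩; exact hy h
      rw [heq, measure_empty]
  rw [Measure.volume_eq_prod ℝ ℝ, Measure.prod_apply hS]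
  simp only [hslice]
  rw [lintegral_indicator measurableSet_Ioi]
  have hsplit1 : Set.Ioi (0:ℝ) = Set.Ioc 0 1 ∪ Set.Ioi 1 := (Set.Ioc_union_Ioi_eq_Ioi zero_le_one).symm
  have hsplit2 : Set.Ioc (0:ℝ) 1 = Set.Ioc 0 x ∪ Set.Ioc x 1 := (Set.Ioc_union_Ioc_eq_Ioc hx0.le hx1.le).symm
  rw [hsplit1, lintegral_union measurableSet_Ioi (Set.Ioc_disjoint_Ioi le_rfl),
    hsplit2, lintegral_union measurableSet_Ioc (Set.Ioc_disjoint_Ioc_of_le le_rfl)]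
  have h3 : ∫⁻ y in Set.Ioi (1:ℝ), ENNReal.ofReal (min (x/y) (y/x) - x*y) = 0 := by
    rw [setLIntegral_congr_fun measurableSet_Ioi
      (fun y (hy : 1 < y) => ?_), lintegral_zero]
    have hy0 : (0:ℝ) < y := lt_trans one_pos hy
    have h1 : x/y ≤ x := div_le_self hx0.le hy.le
    have h2 : x ≤ x*y := le_mul_of_one_le_right hx0.le hy.le
    have : min (x/y) (y/x) - x*y ≤ 0 := by
      have := min_le_left (x/y) (y/x); linarith
    exact ENNReal.ofReal_eq_zero.2 this
  have h1 : ∫⁻ y in Set.Ioc (0:ℝ) x, ENNReal.ofReal (min (x/y) (y/x) - x*y)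
      = ENNReal.ofReal (x/2 - x^3/2) := by
    rw [setLIntegral_congr_fun measurableSet_Ioc
      (fun y (hy : y ∈ Set.Ioc (0:ℝ) x) => ?_)]
    · rw [← ofReal_integral_eq_lintegral_ofReal]
      · rw [← intervalIntegral.integral_of_le hx0.le, L1 x hx0]
      · exact Continuous.integrableOn_Ioc (by fun_prop)
      · refine (ae_restrict_iff' measurableSet_Ioc).2 (ae_of_all _ fun y hy => ?_)
        have hy0 := hy.1
        have hyx := hy.2
        have hyx2 : x*y ≤ y/x := by
          rw [le_div_iff₀ hx0]; nlinarith [mul_pos hy0 hx0]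
        simp only [Pi.zero_apply]; linarith
    · have hmin : min (x/y) (y/x) = y/x := by
        apply min_eq_right
        rw [div_le_div_iff₀ hx0 hy.1]
        nlinarith [hy.1, hy.2]
      rw [hmin]
  have h2 : ∫⁻ y in Set.Ioc x (1:ℝ), ENNReal.ofReal (min (x/y) (y/x) - x*y)
      = ENNReal.ofReal (∫ y in x..(1:ℝ), (x/y - x*y)) := by
    rw [setLIntegral_congr_fun measurableSet_Ioc
      (fun y (hy : y ∈ Set.Ioc x (1:ℝ)) => ?_)]
    · rw [← ofReal_integral_eq_lintegral_ofReal]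
      · rw [← intervalIntegral.integral_of_le hx1.le]
      · apply IntegrableOn.mono_set _ Set.Ioc_subset_Icc_self
        apply ContinuousOn.integrableOn_Icc
        apply ContinuousOn.sub
        · exact continuousOn_const.div continuousOn_id
            (fun y hy => ne_of_gt (lt_of_lt_of_le hx0 hy.1))
        · exact (continuous_const.mul continuous_id).continuousOn
      · refine (ae_restrict_iff' measurableSet_Ioc).2 (ae_of_all _ fun y hy => ?_)
        have hy0 : 0 < y := lt_trans hx0 hy.1
        have : x*y ≤ x/y := by
          rw [le_div_iff₀ hy0]; nlinarith [hy.2, mul_pos hx0 hy0]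
        simp only [Pi.zero_apply]; linarith
    · have hy0 : 0 < y := lt_trans hx0 hy.1
      have hmin : min (x/y) (y/x) = x/y := by
        apply min_eq_left
        rw [div_le_div_iff₀ hy0 hx0]
        nlinarith [hy.1]
      rw [hmin]
  have hx2 : x^2 ≤ 1 := by nlinarith
  have hA : (0:ℝ) ≤ x/2 - x^3/2 := by nlinarith
  have hB : (0:ℝ) ≤ ∫ y in x..(1:ℝ), (x/y - x*y) := by
    apply intervalIntegral.integral_nonneg hx1.le
    intro y hy
    have hy0 : 0 < y := lt_of_lt_of_le hx0 hy.1
    have : x*y ≤ x/y := by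
      rw [le_div_iff₀ hy0]; nlinarith [hy.2, mul_pos hx0 hy0]
    linarith
  rw [h1, h2, h3, add_zero, ← ENNReal.ofReal_add hA hB, L2 x hx0]
  congr 1
  ring

lemma part1 : volume Δε = 1/4 := by
  have hM : MeasurableSet Δε := by
    apply MeasurableSet.inter (measurableSet_lt measurable_const measurable_fst)
    apply MeasurableSet.inter (measurableSet_lt measurable_const measurable_snd.fst)
    apply MeasurableSet.inter (measurableSet_lt measurable_const measurable_snd.snd)
    apply MeasurableSet.inter (measurableSet_le (measurable_snd.fst.mul measurable_snd.snd) measurable_fst)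
    exact MeasurableSet.inter (measurableSet_le (measurable_fst.mul measurable_snd.snd) measurable_snd.fst)
      (measurableSet_le (measurable_fst.mul measurable_snd.fst) measurable_snd.snd)
  rw [Measure.volume_eq_prod ℝ (ℝ × ℝ), Measure.prod_apply hM]
  have hcong : (fun x => (volume : Measure (ℝ × ℝ)) (Prod.mk x ⁻¹' Δε)) =ᵐ[volume]
      (Set.Ioo (0:ℝ) 1).indicator (fun x => ENNReal.ofReal (-(x * Real.log x))) := by
    apply ae_iff.2
    apply measure_mono_null (t := {(1:ℝ)}) ?_ (measure_singleton 1)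
    intro x hx
    simp only [Set.mem_setOf_eq] at hx
    by_contra hne
    simp only [Set.mem_singleton_iff] at hne
    apply hx
    by_cases hx0 : 0 < x
    · by_cases hx1 : x < 1
      · rw [Set.indicator_of_mem (Set.mem_Ioo.2 ⟨hx0, hx1⟩)]
        rw [← slice2 x ⟨hx0, hx1⟩]
        congr 1
        ext q
        simp only [Δε, Set.mem_preimage, Set.mem_setOf_eq, hx0, true_and]
      · have hx1' : 1 < x := lt_of_le_of_ne (not_lt.1 hx1) (Ne.symm hne)
        rw [Set.indicator_of_notMem (by simp [not_lt.1 hx1])]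
        have : Prod.mk x ⁻¹' Δε = ∅ := by
          ext q
          simp only [Δε, Set.mem_preimage, Set.mem_setOf_eq, Set.mem_empty_iff_false, iff_false]
          rintro ⟨_, hq1, hq2, _, h5, h6⟩
          nlinarith
        rw [this, measure_empty]
    · rw [Set.indicator_of_notMem (by simp only [Set.mem_Ioo, not_and]; exact fun h _ => hx0 h)]
      have : Prod.mk x ⁻¹' Δε = ∅ := by
        ext q
        simp only [Δε, Set.mem_preimage, Set.mem_setOf_eq, Set.mem_empty_iff_false, iff_false]
        rintro ⟨h, _⟩; exact hx0 h
      rw [this, measure_empty]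
  rw [lintegral_congr_ae hcong, lintegral_indicator measurableSet_Ioo,
    ← ofReal_integral_eq_lintegral_ofReal]
  · rw [← integral_Ioc_eq_integral_Ioo, ← intervalIntegral.integral_of_le zero_le_one, key,
      show (1/4:ℝ) = (4:ℝ)⁻¹ by norm_num, ENNReal.ofReal_inv_of_pos (by norm_num)]
    norm_num
  · exact (Real.continuous_mul_log.neg).integrableOn_Icc.mono_set Set.Ioo_subset_Icc_self
  · refine (ae_restrict_iff' measurableSet_Ioo).2 (ae_of_all _ fun x hx => ?_)
    simp only [Pi.zero_apply]
    have := Real.log_nonpos hx.1.le hx.2.le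
    nlinarith [hx.1]

lemma part2 : (∫ z in (0 : ℝ)..1,
      ((∫ x in (0 : ℝ)..z, ∫ _y in (z * x)..(x / z), (1 : ℝ)) +
        ∫ x in z..(1 : ℝ), ∫ _y in (x * z)..(z / x), (1 : ℝ))) = 1 / 4 := by
  rw [← key]
  apply intervalIntegral.integral_congr
  intro z hz
  rw [Set.uIcc_of_le zero_le_one] at hz
  rcases eq_or_lt_of_le hz.1 with h0 | h0
  · simp [← h0, Real.log_zero]
  rcases eq_or_lt_of_le hz.2 with h1 | h1
  · simp [h1, Real.log_one]
  have e1 : EqOn (fun x : ℝ => ∫ _y in (z * x)..(x / z), (1 : ℝ)) (fun x => x/z - z*x) (Set.uIcc 0 z) := by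
    intro x _; simp
  have e2 : EqOn (fun x : ℝ => ∫ _y in (x * z)..(z / x), (1 : ℝ)) (fun x => z/x - z*x) (Set.uIcc z 1) := by
    intro x _; simp [mul_comm]
  show (∫ x in (0:ℝ)..z, ∫ _y in (z * x)..(x / z), (1 : ℝ)) + _ = _
  rw [intervalIntegral.integral_congr e1, intervalIntegral.integral_congr e2, L1 z h0]
  have := L2 z h0
  rw [show (fun x : ℝ => z/x - z*x) = fun y => z/y - z*y from rfl, this]
  ring

/-- The volume of the set of embeddable K3 matrices is `1/4`; equivalently, the
corresponding iterated integral equals `1/4`. -/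
theorem stmt_19 :
    volume Δε = 1 / 4 ∧
    (∫ z in (0 : ℝ)..1,
      ((∫ x in (0 : ℝ)..z, ∫ _y in (z * x)..(x / z), (1 : ℝ)) +
        ∫ x in z..(1 : ℝ), ∫ _y in (x * z)..(z / x), (1 : ℝ))) = 1 / 4 :=
  ⟨part1, part2⟩
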